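/- Fix β₁, β₂ ≥ 0 with β₁ + β₂ > 0 and ε ∈ [0, 1/2). Then the function λ ↦ ((1+λ(1−ε))β₁ − (1+λε)β₂) / √((1+λε)² + (1+λ(1−ε))²) is strictly increasing on [0, ∞). Consequently, under the fixed-design Gaussian model with orthonormal design, the causality accuracy C(β̂_{C,λ}) = Φ((√n/γ) · ((1+λ(1−ε))β₁ − (1+λε)β₂)/√((1+λε)² + (1+λ(1−ε))²)) is a strictly increasing function of the penalization parameter λ ≥ 0 whenever the causality detector is better than random (ε < 1/2). -/

import Mathlib

open MeasureTheory ProbabilityTheory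

/-- The cumulative distribution function `Φ` of the standard Gaussian
measure `N(0,1)`. -/
noncomputable def stdGaussianCDF (t : ℝ) : ℝ :=
  ((gaussianReal 0 1) (Set.Iic t)).toReal

lemma stdGaussianCDF_strictMono : StrictMono stdGaussianCDF := by
  intro t u htu
  unfold stdGaussianCDF
  have hsplit : gaussianReal 0 1 (Set.Iic u)
      = gaussianReal 0 1 (Set.Iic t) + gaussianReal 0 1 (Set.Ioc t u) := by
    rw [← measure_union (Set.Iic_disjoint_Ioc le_rfl) measurableSet_Ioc,
      Set.Iic_union_Ioc_eq_Iic htu.le]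
  have hpos : gaussianReal 0 1 (Set.Ioc t u) ≠ 0 := by
    intro h
    have hvol := gaussianReal_absolutelyContinuous' 0 (by norm_num : (1 : NNReal) ≠ 0) h
    rw [Real.volume_Ioc] at hvol
    simp only [ENNReal.ofReal_eq_zero] at hvol
    linarith
  have hlt : gaussianReal 0 1 (Set.Iic t) < gaussianReal 0 1 (Set.Iic u) := by
    rw [hsplit]
    exact ENNReal.lt_add_right (measure_ne_top _ _) hpos
  exact (ENNReal.toReal_lt_toReal (measure_ne_top _ _) (measure_ne_top _ _)).mpr hlt

/-- For `β₁, β₂ ≥ 0` with `β₁ + β₂ > 0` and detector error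
`ε ∈ [0, 1/2)`, the map
`λ ↦ ((1+λ(1−ε))β₁ − (1+λε)β₂)/√((1+λε)² + (1+λ(1−ε))²)` is strictly
increasing on `[0,∞)`; consequently, so is the causality accuracy
`λ ↦ Φ((√n/γ)·(that quantity))`. -/
theorem causality_accuracy_strictMonoOn
    (n : ℕ) (hn : 1 ≤ n) (γ : ℝ) (hγ : 0 < γ)
    (β₁ β₂ : ℝ) (hβ₁ : 0 ≤ β₁) (hβ₂ : 0 ≤ β₂) (hβ : 0 < β₁ + β₂)
    (ε : ℝ) (hε : ε ∈ Set.Ico (0 : ℝ) (1 / 2)) :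
    let f : ℝ → ℝ := fun lam =>
      ((1 + lam * (1 - ε)) * β₁ - (1 + lam * ε) * β₂) /
        Real.sqrt ((1 + lam * ε) ^ 2 + (1 + lam * (1 - ε)) ^ 2)
    StrictMonoOn f (Set.Ici (0 : ℝ))
    ∧ StrictMonoOn (fun lam => stdGaussianCDF ((Real.sqrt n / γ) * f lam))
        (Set.Ici (0 : ℝ)) := by
  obtain ⟨hε0, hε2⟩ := hε
  intro f
  -- derivative data for every `x ≥ 0`
  have key : ∀ x : ℝ, 0 ≤ x → ∃ d : ℝ, HasDerivAt f d x ∧ 0 < d := by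
    intro x hx
    set a : ℝ := 1 + x * ε with ha
    set b : ℝ := 1 + x * (1 - ε) with hb
    have ha1 : 1 ≤ a := by nlinarith
    have hb1 : 1 ≤ b := by nlinarith
    have hDpos : 0 < a ^ 2 + b ^ 2 := by nlinarith
    have hA : HasDerivAt (fun l : ℝ => 1 + l * ε) ε x := by
      simpa using ((hasDerivAt_id x).mul_const ε).const_add 1
    have hB : HasDerivAt (fun l : ℝ => 1 + l * (1 - ε)) (1 - ε) x := by
      simpa using ((hasDerivAt_id x).mul_const (1 - ε)).const_add 1
    have hD : HasDerivAt (fun l : ℝ => (1 + l * ε) ^ 2 + (1 + l * (1 - ε)) ^ 2)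
        (2 * a * ε + 2 * b * (1 - ε)) x := by
      have := (hA.pow 2).add (hB.pow 2)
      exact this.congr_deriv (by rw [ha, hb]; ring)
    set s : ℝ := Real.sqrt (a ^ 2 + b ^ 2) with hs
    have hspos : 0 < s := Real.sqrt_pos.mpr hDpos
    have hs2 : s ^ 2 = a ^ 2 + b ^ 2 := Real.sq_sqrt hDpos.le
    have hS : HasDerivAt (fun l : ℝ => Real.sqrt ((1 + l * ε) ^ 2 + (1 + l * (1 - ε)) ^ 2))
        ((2 * a * ε + 2 * b * (1 - ε)) / (2 * s)) x := by
      have := (Real.hasDerivAt_sqrt hDpos.ne').comp x hD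
      exact this.congr_deriv (by rw [hs]; ring)
    have hN : HasDerivAt (fun l : ℝ => (1 + l * (1 - ε)) * β₁ - (1 + l * ε) * β₂)
        ((1 - ε) * β₁ - ε * β₂) x := (hB.mul_const β₁).sub (hA.mul_const β₂)
    have hf : HasDerivAt f
        ((((1 - ε) * β₁ - ε * β₂) * s -
          (b * β₁ - a * β₂) * ((2 * a * ε + 2 * b * (1 - ε)) / (2 * s))) / s ^ 2) x := by
      have := hN.div hS hspos.ne'
      exact this.congr_deriv (by rw [hs, ha, hb])
    refine ⟨_, hf, ?_⟩
    have hnum : 0 < 2 * ((1 - ε) * β₁ - ε * β₂) * (a ^ 2 + b ^ 2)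
        - (b * β₁ - a * β₂) * (2 * a * ε + 2 * b * (1 - ε)) := by
      have heq : 2 * ((1 - ε) * β₁ - ε * β₂) * (a ^ 2 + b ^ 2)
          - (b * β₁ - a * β₂) * (2 * a * ε + 2 * b * (1 - ε))
          = 2 * (1 - 2 * ε) * (β₁ * a + β₂ * b) := by ring
      rw [heq]
      have h1 : 0 < 1 - 2 * ε := by linarith
      have h2 : 0 < β₁ * a + β₂ * b := by nlinarith
      positivity
    have hrepr : ((1 - ε) * β₁ - ε * β₂) * s -
        (b * β₁ - a * β₂) * ((2 * a * ε + 2 * b * (1 - ε)) / (2 * s))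
        = (2 * ((1 - ε) * β₁ - ε * β₂) * (a ^ 2 + b ^ 2)
          - (b * β₁ - a * β₂) * (2 * a * ε + 2 * b * (1 - ε))) / (2 * s) := by
      rw [← hs2]
      field_simp
    rw [hrepr]
    exact div_pos (div_pos hnum (by positivity)) (by positivity)
  have hmono : StrictMonoOn f (Set.Ici (0 : ℝ)) := by
    classical
    apply strictMonoOn_of_hasDerivWithinAt_pos (convex_Ici 0)
      (f' := fun x => if h : 0 ≤ x then (key x h).choose else 1)
    · intro x hx
      obtain ⟨d, hd, _⟩ := key x hx
      exact hd.continuousAt.continuousWithinAt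
    · intro x hx
      rw [interior_Ici] at hx
      rw [dif_pos hx.le]
      exact ((key x hx.le).choose_spec.1).hasDerivWithinAt
    · intro x hx
      rw [interior_Ici] at hx
      rw [dif_pos hx.le]
      exact (key x hx.le).choose_spec.2
  refine ⟨hmono, ?_⟩
  have hc : 0 < Real.sqrt n / γ := by
    apply div_pos _ hγ
    have : (1 : ℝ) ≤ (n : ℝ) := by exact_mod_cast hn
    exact Real.sqrt_pos.mpr (by linarith)
  intro x hx y hy hxy
  exact stdGaussianCDF_strictMono (by
    exact mul_lt_mul_of_pos_left (hmono hx hy hxy) hc)
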